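/- Scale-invariance at the graph level: for every finite simple graph G without isolated nodes, with node features X and class labels Y, and for every real scalar c ≠ 0, the normalized graph-level CFH computed with the scaled features cX equals the one computed with X, i.e., h̃^(G)(cX) = h̃^(G)(X). -/
import Mathlib


open Finset

/-- The class-controlled feature `(X_i | Y)` of node `i`: its feature minus the mean
feature of the nodes of its class. -/
noncomputable def ccf {V : Type*} [Fintype V] [DecidableEq V] {k c : ℕ}
    (X : V → EuclideanSpace ℝ (Fin k)) (Y : V → Fin c) (i : V) :
    EuclideanSpace ℝ (Fin k) :=
  X i - ((Finset.univ.filter fun j => Y j = Y i).card : ℝ)⁻¹ •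
    ∑ j ∈ Finset.univ.filter fun j => Y j = Y i, X j

/-- `d(v_i, V')`: mean Euclidean distance between the class-controlled feature of `i`
and those of the nodes in `S`. -/
noncomputable def dFun {V : Type*} [Fintype V] [DecidableEq V] {k c : ℕ}
    (X : V → EuclideanSpace ℝ (Fin k)) (Y : V → Fin c) (i : V) (S : Finset V) : ℝ :=
  (S.card : ℝ)⁻¹ * ∑ j ∈ S, ‖ccf X Y i - ccf X Y j‖

/-- The homophily baseline `b(v_i) = d(v_i, V \ {v_i})`. -/
noncomputable def bFun {V : Type*} [Fintype V] [DecidableEq V] {k c : ℕ}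
    (X : V → EuclideanSpace ℝ (Fin k)) (Y : V → Fin c) (i : V) : ℝ :=
  dFun X Y i (Finset.univ.erase i)

open scoped Classical in
/-- The neighbor finset `N_i` of node `i` in the graph `G`. -/
noncomputable def nbr {V : Type*} [Fintype V] (G : SimpleGraph V) (i : V) : Finset V :=
  Finset.univ.filter fun j => G.Adj i j

/-- `d(v_i, N_i)`: mean distance from `i` to its neighbors. -/
noncomputable def dN {V : Type*} [Fintype V] [DecidableEq V] {k c : ℕ}
    (G : SimpleGraph V) (X : V → EuclideanSpace ℝ (Fin k)) (Y : V → Fin c) (i : V) : ℝ :=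
  dFun X Y i (nbr G i)

/-- Unnormalized node-level CFH `h^(v)_i = b(v_i) - d(v_i, N_i)`. -/
noncomputable def hv {V : Type*} [Fintype V] [DecidableEq V] {k c : ℕ}
    (G : SimpleGraph V) (X : V → EuclideanSpace ℝ (Fin k)) (Y : V → Fin c) (i : V) : ℝ :=
  bFun X Y i - dN G X Y i

/-- Normalized node-level CFH `h̃^(v)_i = h^(v)_i / max(b(v_i), d(v_i, N_i))`
(equal to `0` when the denominator vanishes, by the convention `x / 0 = 0`). -/
noncomputable def hvNorm {V : Type*} [Fintype V] [DecidableEq V] {k c : ℕ}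
    (G : SimpleGraph V) (X : V → EuclideanSpace ℝ (Fin k)) (Y : V → Fin c) (i : V) : ℝ :=
  hv G X Y i / max (bFun X Y i) (dN G X Y i)

/-- Unnormalized graph-level CFH `h^(G)`, the mean of the node-level CFH values. -/
noncomputable def hG {V : Type*} [Fintype V] [DecidableEq V] {k c : ℕ}
    (G : SimpleGraph V) (X : V → EuclideanSpace ℝ (Fin k)) (Y : V → Fin c) : ℝ :=
  (Fintype.card V : ℝ)⁻¹ * ∑ i, hv G X Y i

/-- Normalized graph-level CFH
`h̃^(G) = h^(G) / ((1/|V|) max(Σ_i b(v_i), Σ_i d(v_i, N_i)))`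
(equal to `0` when the denominator vanishes, by the convention `x / 0 = 0`). -/
noncomputable def hGNorm {V : Type*} [Fintype V] [DecidableEq V] {k c : ℕ}
    (G : SimpleGraph V) (X : V → EuclideanSpace ℝ (Fin k)) (Y : V → Fin c) : ℝ :=
  hG G X Y /
    ((Fintype.card V : ℝ)⁻¹ * max (∑ i, bFun X Y i) (∑ i, dN G X Y i))

lemma ccf_smul {V : Type*} [Fintype V] [DecidableEq V] {k c : ℕ}
    (X : V → EuclideanSpace ℝ (Fin k)) (Y : V → Fin c) (r : ℝ) (i : V) :
    ccf (fun j => r • X j) Y i = r • ccf X Y i := by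
  simp only [ccf, ← Finset.smul_sum, smul_sub, smul_comm r]

lemma dFun_smul {V : Type*} [Fintype V] [DecidableEq V] {k c : ℕ}
    (X : V → EuclideanSpace ℝ (Fin k)) (Y : V → Fin c) (r : ℝ) (i : V) (S : Finset V) :
    dFun (fun j => r • X j) Y i S = |r| * dFun X Y i S := by
  simp only [dFun, ccf_smul, ← smul_sub, norm_smul, Real.norm_eq_abs,
    ← Finset.mul_sum]
  ring

lemma bFun_smul {V : Type*} [Fintype V] [DecidableEq V] {k c : ℕ}
    (X : V → EuclideanSpace ℝ (Fin k)) (Y : V → Fin c) (r : ℝ) (i : V) :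
    bFun (fun j => r • X j) Y i = |r| * bFun X Y i := dFun_smul ..

lemma dN_smul {V : Type*} [Fintype V] [DecidableEq V] {k c : ℕ}
    (G : SimpleGraph V) (X : V → EuclideanSpace ℝ (Fin k)) (Y : V → Fin c) (r : ℝ) (i : V) :
    dN G (fun j => r • X j) Y i = |r| * dN G X Y i := dFun_smul ..

/-- Lemma 3.2, graph level. The normalized graph-level CFH is invariant
under rescaling all node features by a nonzero real scalar. -/
theorem graph_level_CFH_scale_invariant {V : Type*} [Fintype V] [DecidableEq V] {k c : ℕ}
    (G : SimpleGraph V) (X : V → EuclideanSpace ℝ (Fin k)) (Y : V → Fin c)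
    (hNoIso : ∀ v : V, (nbr G v).Nonempty) (r : ℝ) (hr : r ≠ 0) :
    hGNorm G (fun j => r • X j) Y = hGNorm G X Y := by
  have hr' : |r| ≠ 0 := abs_ne_zero.mpr hr
  have h1 : hG G (fun j => r • X j) Y = |r| * hG G X Y := by
    simp only [hG, hv, bFun_smul, dN_smul, Finset.mul_sum]
    congr 1; ext i; ring
  simp only [hGNorm, h1, bFun_smul, dN_smul, ← Finset.mul_sum]
  rw [← mul_max_of_nonneg _ _ (abs_nonneg r), mul_left_comm,
    mul_div_mul_left _ _ hr']
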